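/- Let I be an open interval and f ∈ C²(I) with f′ > 0, f convex (f″ ≥ 0). Define the set U₀ of generators h ∈ C²(I) with h′ nowhere vanishing, h″ nowhere vanishing, h′/h″ concave, and h′/h″ ≥ f′/f″ (pointwise, assuming f″ > 0 everywhere). If m := the concave envelope of f′/f″ among continuous functions on I is finite and g ∈ C²(I) solves g′/g″ = m with g″ nowhere vanishing, then A_g is Jensen convex, A_g ≤ A_f, and A_h ≤ A_g for every h ∈ U₀; hence sup{A_h(x) : h ∈ U₀} = A_g(x) for every x. -/

import Mathlib

/-- The `n`-variable quasiarithmetic mean on `I` generated by `f`. -/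
noncomputable def QAMean (I : Set ℝ) (f : ℝ → ℝ) {n : ℕ} (a : Fin n → ℝ) : ℝ :=
  Function.invFunOn f I ((∑ i, f (a i)) / n)

/-- The family `U₀` of generators of convex quasiarithmetic minorants of `A_f`. -/
def memU0 (I : Set ℝ) (f : ℝ → ℝ) (h : ℝ → ℝ) : Prop :=
  ContDiffOn ℝ 2 h I ∧ (∀ x ∈ I, deriv h x ≠ 0) ∧
  (∀ x ∈ I, deriv (deriv h) x ≠ 0) ∧
  ConcaveOn ℝ I (fun x => deriv h x / deriv (deriv h) x) ∧
  (∀ x ∈ I, deriv f x / deriv (deriv f) x ≤ deriv h x / deriv (deriv h) x)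

open Set Function

namespace QAAux

variable {I : Set ℝ}




lemma hda (hIop : IsOpen I) {k : ℝ → ℝ} (hk : ContDiffOn ℝ 2 k I)
    {x : ℝ} (hx : x ∈ I) : HasDerivAt k (deriv k x) x :=
  (((hk.differentiableOn two_ne_zero).differentiableAt (hIop.mem_nhds hx))).hasDerivAt

lemma hda' (hIop : IsOpen I) {k : ℝ → ℝ} (hk : ContDiffOn ℝ 2 k I)
    {x : ℝ} (hx : x ∈ I) : HasDerivAt (deriv k) (deriv (deriv k) x) x := by
  have h1 : ContDiffOn ℝ 1 (deriv k) I := hk.deriv_of_isOpen hIop (by norm_num)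
  exact ((h1.differentiableOn one_ne_zero).differentiableAt (hIop.mem_nhds hx)).hasDerivAt

lemma sign_dichotomy (hIop : IsOpen I) (hIcv : Convex ℝ I) {k : ℝ → ℝ}
    (hk : ContDiffOn ℝ 2 k I) (hk' : ∀ x ∈ I, deriv k x ≠ 0) :
    (∀ x ∈ I, 0 < deriv k x) ∨ (∀ x ∈ I, deriv k x < 0) := by
  by_contra hcon
  push_neg at hcon
  obtain ⟨⟨x, hx, hx0⟩, ⟨y, hy, hy0⟩⟩ := hcon
  have hxneg : deriv k x < 0 := lt_of_le_of_ne hx0 (hk' x hx)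
  have hypos : 0 < deriv k y := lt_of_le_of_ne hy0 (Ne.symm (hk' y hy))
  have hcont : ContinuousOn (deriv k) I := hk.continuousOn_deriv_of_isOpen hIop one_le_two
  have hpc : IsPreconnected (deriv k '' I) := (hIcv.isPreconnected).image _ hcont
  have h0 : (0:ℝ) ∈ deriv k '' I :=
    hpc.ordConnected.out ⟨x, hx, rfl⟩ ⟨y, hy, rfl⟩ ⟨hxneg.le, hypos.le⟩
  obtain ⟨z, hz, hz0⟩ := h0
  exact hk' z hz hz0

lemma strictMono_of (hIop : IsOpen I) (hIcv : Convex ℝ I) {k : ℝ → ℝ}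
    (hk : ContDiffOn ℝ 2 k I) (hk' : ∀ x ∈ I, 0 < deriv k x) : StrictMonoOn k I :=
  strictMonoOn_of_deriv_pos hIcv (hk.continuousOn) (fun x hx => hk' x (by rwa [hIop.interior_eq] at hx))

lemma qa_spec (hIcv : Convex ℝ I) {k : ℝ → ℝ} (hkc : ContinuousOn k I)
    {n : ℕ} {a : Fin (n+1) → ℝ} (ha : ∀ i, a i ∈ I) :
    QAMean I k a ∈ I ∧ k (QAMean I k a) = (∑ i, k (a i)) / (n+1) := by
  have himg : Convex ℝ (k '' I) :=
    convex_iff_ordConnected.2 ((hIcv.isPreconnected.image k hkc).ordConnected)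
  have hv : ((∑ i, k (a i)) / (n+1) : ℝ) ∈ k '' I := by
    have := himg.sum_mem (t := Finset.univ) (w := fun _ : Fin (n+1) => ((n:ℝ)+1)⁻¹)
      (z := fun i => k (a i)) (fun i _ => by positivity)
      (by simp [Finset.sum_const, Finset.card_univ]; rw [mul_inv_cancel₀]; positivity)
      (fun i _ => ⟨a i, ha i, rfl⟩)
    convert this using 1
    simp only [smul_eq_mul]
    rw [div_eq_mul_inv, Finset.sum_mul]
    exact Finset.sum_congr rfl (fun i _ => mul_comm _ _)
  obtain ⟨x, hx, hxv⟩ := hv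
  have hex : ∃ z ∈ I, k z = (∑ i, k (a i)) / ((n:ℝ)+1) := ⟨x, hx, hxv⟩
  have h1 : QAMean I k a ∈ I := by
    have := Function.invFunOn_mem hex
    simpa [QAMean] using this
  have h2 : k (QAMean I k a) = (∑ i, k (a i)) / ((n:ℝ)+1) := by
    have := Function.invFunOn_eq hex
    simpa [QAMean] using this
  exact ⟨h1, h2⟩



lemma icc_subset_of_open (hIop : IsOpen I) {x : ℝ} (hx : x ∈ I) {ε : ℝ} (hε : 0 < ε) :
    ∃ δ : ℝ, 0 < δ ∧ δ < ε ∧ Icc (x - δ) (x + δ) ⊆ I := by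
  obtain ⟨r, hr, hball⟩ := Metric.isOpen_iff.1 hIop x hx
  refine ⟨min (r/2) (ε/2), by positivity, lt_of_le_of_lt (min_le_right _ _) (by linarith), ?_⟩
  intro y hy
  apply hball
  rw [Metric.mem_ball, Real.dist_eq, abs_sub_lt_iff]
  have h1 : min (r/2) (ε/2) ≤ r/2 := min_le_left _ _
  constructor <;> [skip; skip] <;>
    · rcases hy with ⟨h2, h3⟩
      linarith

lemma image_isOpen (hIop : IsOpen I) {h : ℝ → ℝ} (hc : ContinuousOn h I)
    (hm : StrictMonoOn h I) : IsOpen (h '' I) := by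
  rw [isOpen_iff_mem_nhds]
  rintro v ⟨x, hx, rfl⟩
  obtain ⟨δ, hδ, -, hsub⟩ := icc_subset_of_open hIop hx one_pos
  have hxm : x - δ ∈ I := hsub ⟨by linarith, by linarith⟩
  have hxp : x + δ ∈ I := hsub ⟨by linarith, by linarith⟩
  have hlt1 : h (x - δ) < h x := hm hxm hx (by linarith)
  have hlt2 : h x < h (x + δ) := hm hx hxp (by linarith)
  have hIVT : Icc (h (x - δ)) (h (x + δ)) ⊆ h '' Icc (x - δ) (x + δ) :=
    intermediate_value_Icc (by linarith) (hc.mono hsub)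
  refine mem_nhds_iff.2 ⟨Ioo (h (x - δ)) (h (x + δ)), ?_, isOpen_Ioo, hlt1, hlt2⟩
  exact fun y hy => (image_mono hsub) (hIVT ⟨hy.1.le, hy.2.le⟩)

lemma inv_spec {h : ℝ → ℝ} (hm : StrictMonoOn h I) {v : ℝ} (hv : v ∈ h '' I) :
    Function.invFunOn h I v ∈ I ∧ h (Function.invFunOn h I v) = v := by
  obtain ⟨x, hx, rfl⟩ := hv
  exact ⟨Function.invFunOn_mem ⟨x, hx, rfl⟩, Function.invFunOn_eq ⟨x, hx, rfl⟩⟩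

lemma inv_apply {h : ℝ → ℝ} (hm : StrictMonoOn h I) {x : ℝ} (hx : x ∈ I) :
    Function.invFunOn h I (h x) = x :=
  hm.injOn.leftInvOn_invFunOn hx

lemma inv_continuousAt (hIop : IsOpen I) {h : ℝ → ℝ} (hc : ContinuousOn h I)
    (hm : StrictMonoOn h I) {v : ℝ} (hv : v ∈ h '' I) :
    ContinuousAt (Function.invFunOn h I) v := by
  obtain ⟨x, hx, rfl⟩ := hv
  rw [Metric.continuousAt_iff]
  intro ε hε
  obtain ⟨δ, hδ, hδε, hsub⟩ := icc_subset_of_open hIop hx hε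
  have hxm : x - δ ∈ I := hsub ⟨by linarith, by linarith⟩
  have hxp : x + δ ∈ I := hsub ⟨by linarith, by linarith⟩
  have hlt1 : h (x - δ) < h x := hm hxm hx (by linarith)
  have hlt2 : h x < h (x + δ) := hm hx hxp (by linarith)
  refine ⟨min (h x - h (x - δ)) (h (x + δ) - h x), by simp [hlt1, hlt2], ?_⟩
  intro y hy
  rw [Real.dist_eq, abs_sub_lt_iff] at hy
  have hy1 : h (x - δ) < y := by
    have := hy.2
    have := min_le_left (h x - h (x - δ)) (h (x + δ) - h x)
    linarith
  have hy2 : y < h (x + δ) := by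
    have := hy.1
    have := min_le_right (h x - h (x - δ)) (h (x + δ) - h x)
    linarith
  obtain ⟨x', hx', hx'y⟩ :=
    intermediate_value_Icc (by linarith : x - δ ≤ x + δ) (hc.mono hsub) ⟨hy1.le, hy2.le⟩
  have hinv : Function.invFunOn h I y = x' := by
    rw [← hx'y]; exact inv_apply hm (hsub hx')
  rw [hinv, inv_apply hm hx, Real.dist_eq, abs_sub_lt_iff]
  rcases hx' with ⟨h1, h2⟩
  constructor <;> linarith

lemma inv_hasDerivAt (hIop : IsOpen I) {h : ℝ → ℝ} (hk : ContDiffOn ℝ 2 h I)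
    (hm : StrictMonoOn h I) (hh' : ∀ x ∈ I, deriv h x ≠ 0) {v : ℝ} (hv : v ∈ h '' I) :
    HasDerivAt (Function.invFunOn h I) (deriv h (Function.invFunOn h I v))⁻¹ v := by
  have hJ : IsOpen (h '' I) := image_isOpen hIop hk.continuousOn hm
  have hmem := (inv_spec hm hv).1
  have heq := (inv_spec hm hv).2
  have hev : ∀ᶠ y in nhds v, h (Function.invFunOn h I y) = y :=
    Filter.eventually_of_mem (hJ.mem_nhds hv) (fun y hy => (inv_spec hm hy).2)
  exact HasDerivAt.of_local_left_inverse (inv_continuousAt hIop hk.continuousOn hm hv)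
    (by
      have := (((hk.differentiableOn two_ne_zero).differentiableAt
        (hIop.mem_nhds hmem))).hasDerivAt
      exact this)
    (hh' _ hmem) hev



lemma wsum (n : ℕ) : ∑ _i : Fin (n+1), ((n:ℝ)+1)⁻¹ = 1 := by
  simp [Finset.sum_const, Finset.card_univ]
  rw [mul_inv_cancel₀]; positivity

lemma avg_eq {n : ℕ} (z : Fin (n+1) → ℝ) :
    ∑ i, (((n:ℝ)+1)⁻¹) • z i = (∑ i, z i)/((n:ℝ)+1) := by
  simp only [smul_eq_mul]
  rw [div_eq_mul_inv, Finset.sum_mul]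
  exact Finset.sum_congr rfl (fun i _ => mul_comm _ _)

lemma phi_convex (hIop : IsOpen I) (hIcv : Convex ℝ I) {h k : ℝ → ℝ}
    (hh : ContDiffOn ℝ 2 h I) (hk : ContDiffOn ℝ 2 k I)
    (hh' : ∀ x ∈ I, 0 < deriv h x)
    (hcmp : ∀ x ∈ I, deriv k x * deriv (deriv h) x ≤ deriv (deriv k) x * deriv h x) :
    ConvexOn ℝ (h '' I) (k ∘ Function.invFunOn h I) := by
  set ψ := Function.invFunOn h I with hψdef
  have hm : StrictMonoOn h I := strictMono_of hIop hIcv hh hh'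
  have hJop : IsOpen (h '' I) := image_isOpen hIop hh.continuousOn hm
  have hJcv : Convex ℝ (h '' I) :=
    convex_iff_ordConnected.2 ((hIcv.isPreconnected.image h hh.continuousOn).ordConnected)
  have hψd : ∀ v ∈ h '' I, HasDerivAt ψ (deriv h (ψ v))⁻¹ v :=
    fun v hv => inv_hasDerivAt hIop hh hm (fun x hx => (hh' x hx).ne') hv
  have hψmem : ∀ v ∈ h '' I, ψ v ∈ I := fun v hv => (inv_spec hm hv).1
  set F : ℝ → ℝ := fun v => deriv k (ψ v) * (deriv h (ψ v))⁻¹ with hFdef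
  have hφd : ∀ v ∈ h '' I, HasDerivAt (k ∘ ψ) (F v) v := fun v hv =>
    (hda hIop hk (hψmem v hv)).comp v (hψd v hv)
  set G : ℝ → ℝ := fun v =>
    (deriv (deriv k) (ψ v) * (deriv h (ψ v))⁻¹ +
      deriv k (ψ v) * (-(deriv (deriv h) (ψ v)) / (deriv h (ψ v))^2)) * (deriv h (ψ v))⁻¹
    with hGdef
  have hFd : ∀ v ∈ h '' I, HasDerivAt F (G v) v := by
    intro v hv
    have hx := hψmem v hv
    have hq : HasDerivAt (fun x => deriv k x * (deriv h x)⁻¹)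
        (deriv (deriv k) (ψ v) * (deriv h (ψ v))⁻¹ +
          deriv k (ψ v) * (-(deriv (deriv h) (ψ v)) / (deriv h (ψ v))^2)) (ψ v) :=
      (hda' hIop hk hx).mul ((hda' hIop hh hx).inv (hh' _ hx).ne')
    exact hq.comp v (hψd v hv)
  have hG0 : ∀ v ∈ h '' I, 0 ≤ G v := by
    intro v hv
    have hx := hψmem v hv
    have hA : 0 < deriv h (ψ v) := hh' _ hx
    have hc := hcmp _ hx
    have heq : G v = (deriv (deriv k) (ψ v) * deriv h (ψ v)
        - deriv k (ψ v) * deriv (deriv h) (ψ v)) / (deriv h (ψ v))^3 := by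
      rw [hGdef]
      field_simp
      ring
    rw [heq]
    apply div_nonneg (by linarith) (by positivity)
  apply convexOn_of_hasDerivWithinAt2_nonneg hJcv (f' := F) (f'' := G)
  · exact fun v hv => (hφd v hv).continuousAt.continuousWithinAt
  · intro v hv
    rw [hJop.interior_eq] at hv
    exact (hφd v hv).hasDerivWithinAt
  · intro v hv
    rw [hJop.interior_eq] at hv
    exact (hFd v hv).hasDerivWithinAt
  · intro v hv
    rw [hJop.interior_eq] at hv
    exact hG0 v hv

lemma qa_le (hIop : IsOpen I) (hIcv : Convex ℝ I) {h k : ℝ → ℝ}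
    (hh : ContDiffOn ℝ 2 h I) (hk : ContDiffOn ℝ 2 k I)
    (hh' : ∀ x ∈ I, 0 < deriv h x) (hk' : ∀ x ∈ I, 0 < deriv k x)
    (hcmp : ∀ x ∈ I, deriv k x * deriv (deriv h) x ≤ deriv (deriv k) x * deriv h x)
    {n : ℕ} {a : Fin (n+1) → ℝ} (ha : ∀ i, a i ∈ I) :
    QAMean I h a ≤ QAMean I k a := by
  set ψ := Function.invFunOn h I with hψdef
  have hmh : StrictMonoOn h I := strictMono_of hIop hIcv hh hh'
  have hmk : StrictMonoOn k I := strictMono_of hIop hIcv hk hk'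
  obtain ⟨hzh, hzh'⟩ := qa_spec hIcv hh.continuousOn ha
  obtain ⟨hzk, hzk'⟩ := qa_spec hIcv hk.continuousOn ha
  have hcv := phi_convex hIop hIcv hh hk hh' hcmp
  have hjen := hcv.map_sum_le (t := Finset.univ) (w := fun _ : Fin (n+1) => ((n:ℝ)+1)⁻¹)
    (p := fun i => h (a i)) (fun i _ => by positivity) (wsum n)
    (fun i _ => ⟨a i, ha i, rfl⟩)
  rw [avg_eq] at hjen
  have hstep : ∀ i : Fin (n+1), (k ∘ Function.invFunOn h I) (h (a i)) = k (a i) := fun i => by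
    simp only [Function.comp_apply]; rw [inv_apply hmh (ha i)]
  simp only [hstep] at hjen
  rw [avg_eq] at hjen
  have hkey : k (QAMean I h a) ≤ k (QAMean I k a) := by
    have h1 : (k ∘ ψ) ((∑ i, h (a i))/((n:ℝ)+1)) = k (QAMean I h a) := by
      rw [← hzh', Function.comp_apply, hψdef, inv_apply hmh hzh]
    rw [← h1, hzk']
    exact hjen
  exact (hmk.le_iff_le hzh hzk).1 hkey
lemma arith (α β A B Ka Kb K KC : ℝ) (hA : 0<A) (hB : 0<B) (hKa : 0<Ka) (hKb : 0<Kb)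
    (hK : 0<K) (hKC : 0<KC)
    (hconc : (A*Kb + B*Ka)*KC ≤ 2*K*(Ka*Kb)) :
    KC * ((A⁻¹*α + B⁻¹*β)/2) * ((A⁻¹*α + B⁻¹*β)/2)
      + K * ((-(Ka*(A⁻¹*α))/A^2*α + -(Kb*(B⁻¹*β))/B^2*β)/2) ≤ 0 := by
  have hS : (0:ℝ) ≤ Ka*α^2*B^3 + Kb*β^2*A^3 := by positivity
  have cs : A*B*(B*α+A*β)^2*(Ka*Kb) ≤ (A*Kb+B*Ka)*(Ka*α^2*B^3+Kb*β^2*A^3) := by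
    nlinarith [sq_nonneg (α*B^2*Ka - β*A^2*Kb)]
  have step : (A*Kb+B*Ka)*KC*(Ka*α^2*B^3+Kb*β^2*A^3) ≤ 2*K*(Ka*Kb)*(Ka*α^2*B^3+Kb*β^2*A^3) :=
    mul_le_mul_of_nonneg_right hconc hS
  have key : KC * (B*α+A*β)^2 * (A*B) ≤ 2*K*(Ka*α^2*B^3 + Kb*β^2*A^3) := by
    have h1 : KC * (A*B*(B*α+A*β)^2*(Ka*Kb)) ≤ KC * ((A*Kb+B*Ka)*(Ka*α^2*B^3+Kb*β^2*A^3)) :=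
      mul_le_mul_of_nonneg_left cs hKC.le
    have h2 : KC * (B*α+A*β)^2 * (A*B) * (Ka*Kb) ≤ 2*K*(Ka*α^2*B^3+Kb*β^2*A^3) * (Ka*Kb) := by
      nlinarith [h1, step]
    exact le_of_mul_le_mul_right h2 (by positivity)
  have hE : KC * ((A⁻¹*α + B⁻¹*β)/2) * ((A⁻¹*α + B⁻¹*β)/2)
      + K * ((-(Ka*(A⁻¹*α))/A^2*α + -(Kb*(B⁻¹*β))/B^2*β)/2)
      = (KC*(B*α+A*β)^2*(A*B) - 2*K*(Ka*α^2*B^3+Kb*β^2*A^3)) / (4*A^3*B^3) := by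
    field_simp
    ring
  rw [hE]
  apply div_nonpos_of_nonpos_of_nonneg (by linarith) (by positivity)
lemma clear_div {A B Ka Kb K KC : ℝ} (hKa : 0<Ka) (hKb : 0<Kb) (hKC : 0<KC)
    (h : 1/2*(A/Ka) + 1/2*(B/Kb) ≤ K/KC) : (A*Kb + B*Ka)*KC ≤ 2*K*(Ka*Kb) := by
  have e : 1/2*(A/Ka)+1/2*(B/Kb) = (A*Kb+B*Ka)/(2*(Ka*Kb)) := by field_simp
  rw [e, div_le_div_iff₀ (by positivity) hKC] at h
  linarith

lemma mid_mem (hIcv : Convex ℝ I) {u v : ℝ} (hu : u ∈ I) (hv : v ∈ I) : (u+v)/2 ∈ I := by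
  have := hIcv hu hv (by norm_num : (0:ℝ) ≤ 1/2) (by norm_num : (0:ℝ) ≤ 1/2) (by norm_num)
  have heq : (1/2 : ℝ) • u + (1/2 : ℝ) • v = (u+v)/2 := by
    simp [smul_eq_mul]; ring
  rwa [heq] at this

lemma hline (c d τ : ℝ) : HasDerivAt (fun τ => c + d*τ) d τ := by
  have h := ((hasDerivAt_id' τ).const_mul d).const_add c
  rwa [mul_one] at h

lemma H_concave (hIop : IsOpen I) (hIcv : Convex ℝ I) {k : ℝ → ℝ} (hk : ContDiffOn ℝ 2 k I)
    (hk' : ∀ x ∈ I, 0 < deriv k x) (hk'' : ∀ x ∈ I, 0 < deriv (deriv k) x)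
    (hu : ConcaveOn ℝ I (fun x => deriv k x / deriv (deriv k) x)) :
    ConcaveOn ℝ ((k '' I) ×ˢ (k '' I))
      (fun P : ℝ × ℝ => k ((Function.invFunOn k I P.1 + Function.invFunOn k I P.2)/2)) := by
  have hm : StrictMonoOn k I := strictMono_of hIop hIcv hk hk'
  have hJcv : Convex ℝ (k '' I) :=
    convex_iff_ordConnected.2 ((hIcv.isPreconnected.image k hk.continuousOn).ordConnected)
  have hkne : ∀ x ∈ I, deriv k x ≠ 0 := fun x hx => (hk' x hx).ne'
  have hψmem : ∀ v ∈ k '' I, Function.invFunOn k I v ∈ I := fun v hv => (inv_spec hm hv).1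
  constructor
  · exact hJcv.prod hJcv
  rintro ⟨s, t⟩ hP ⟨s', t'⟩ hQ w1 w2 hw1 hw2 hw
  simp only [Set.mem_prod] at hP hQ
  set ψ := Function.invFunOn k I with hψdef
  set φ : ℝ → ℝ := fun τ => k ((ψ (s + (s'-s)*τ) + ψ (t + (t'-t)*τ))/2) with hφdef
  -- membership of the moving points
  have hsm : ∀ τ ∈ Icc (0:ℝ) 1, s + (s'-s)*τ ∈ k '' I := by
    rintro τ ⟨h0, h1⟩
    have hmem := hJcv hP.1 hQ.1 (by linarith : (0:ℝ) ≤ 1-τ) h0 (by ring)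
    have heq : (1-τ) • s + τ • s' = s + (s'-s)*τ := by simp [smul_eq_mul]; ring
    rwa [heq] at hmem
  have htm : ∀ τ ∈ Icc (0:ℝ) 1, t + (t'-t)*τ ∈ k '' I := by
    rintro τ ⟨h0, h1⟩
    have hmem := hJcv hP.2 hQ.2 (by linarith : (0:ℝ) ≤ 1-τ) h0 (by ring)
    have heq : (1-τ) • t + τ • t' = t + (t'-t)*τ := by simp [smul_eq_mul]; ring
    rwa [heq] at hmem
  have hamem : ∀ τ ∈ Icc (0:ℝ) 1, ψ (s + (s'-s)*τ) ∈ I := fun τ hτ => hψmem _ (hsm τ hτ)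
  have hbmem : ∀ τ ∈ Icc (0:ℝ) 1, ψ (t + (t'-t)*τ) ∈ I := fun τ hτ => hψmem _ (htm τ hτ)
  have hCmem : ∀ τ ∈ Icc (0:ℝ) 1, (ψ (s + (s'-s)*τ) + ψ (t + (t'-t)*τ))/2 ∈ I :=
    fun τ hτ => mid_mem hIcv (hamem τ hτ) (hbmem τ hτ)
  have haD : ∀ τ ∈ Icc (0:ℝ) 1, HasDerivAt (fun τ => ψ (s + (s'-s)*τ))
      ((deriv k (ψ (s + (s'-s)*τ)))⁻¹ * (s'-s)) τ := fun τ hτ =>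
    by have := (inv_hasDerivAt hIop hk hm hkne (hsm τ hτ)).comp τ (hline s (s'-s) τ); exact this
  have hbD : ∀ τ ∈ Icc (0:ℝ) 1, HasDerivAt (fun τ => ψ (t + (t'-t)*τ))
      ((deriv k (ψ (t + (t'-t)*τ)))⁻¹ * (t'-t)) τ := fun τ hτ =>
    by have := (inv_hasDerivAt hIop hk hm hkne (htm τ hτ)).comp τ (hline t (t'-t) τ); exact this
  set f' : ℝ → ℝ := fun τ => deriv k ((ψ (s + (s'-s)*τ) + ψ (t + (t'-t)*τ))/2) *
    (((deriv k (ψ (s + (s'-s)*τ)))⁻¹ * (s'-s) + (deriv k (ψ (t + (t'-t)*τ)))⁻¹ * (t'-t))/2)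
    with hf'def
  have hφD : ∀ τ ∈ Icc (0:ℝ) 1, HasDerivAt φ (f' τ) τ := fun τ hτ =>
    (hda hIop hk (hCmem τ hτ)).comp τ (((haD τ hτ).add (hbD τ hτ)).div_const 2)
  set f'' : ℝ → ℝ := fun τ =>
    deriv (deriv k) ((ψ (s + (s'-s)*τ) + ψ (t + (t'-t)*τ))/2) *
      (((deriv k (ψ (s + (s'-s)*τ)))⁻¹ * (s'-s) + (deriv k (ψ (t + (t'-t)*τ)))⁻¹ * (t'-t))/2) *
      (((deriv k (ψ (s + (s'-s)*τ)))⁻¹ * (s'-s) + (deriv k (ψ (t + (t'-t)*τ)))⁻¹ * (t'-t))/2)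
    + deriv k ((ψ (s + (s'-s)*τ) + ψ (t + (t'-t)*τ))/2) *
      ((-(deriv (deriv k) (ψ (s + (s'-s)*τ)) * ((deriv k (ψ (s + (s'-s)*τ)))⁻¹ * (s'-s))) /
          (deriv k (ψ (s + (s'-s)*τ)))^2 * (s'-s)
        + -(deriv (deriv k) (ψ (t + (t'-t)*τ)) * ((deriv k (ψ (t + (t'-t)*τ)))⁻¹ * (t'-t))) /
          (deriv k (ψ (t + (t'-t)*τ)))^2 * (t'-t))/2)
    with hf''def
  have hf'D : ∀ τ ∈ Icc (0:ℝ) 1, HasDerivAt f' (f'' τ) τ := by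
    intro τ hτ
    exact ((hda' hIop hk (hCmem τ hτ)).comp τ
        (((haD τ hτ).add (hbD τ hτ)).div_const 2)).mul
      (((((((hda' hIop hk (hamem τ hτ)).comp τ (haD τ hτ)).inv
            (by exact hkne _ (hamem τ hτ))).mul_const (s'-s)).add
        ((((hda' hIop hk (hbmem τ hτ)).comp τ (hbD τ hτ)).inv
            (by exact hkne _ (hbmem τ hτ))).mul_const (t'-t))).div_const 2))
  have hf''0 : ∀ τ ∈ Icc (0:ℝ) 1, f'' τ ≤ 0 := by
    intro τ hτ
    have hA := hk' _ (hamem τ hτ)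
    have hB := hk' _ (hbmem τ hτ)
    have hKa := hk'' _ (hamem τ hτ)
    have hKb := hk'' _ (hbmem τ hτ)
    have hK := hk' _ (hCmem τ hτ)
    have hKC := hk'' _ (hCmem τ hτ)
    have hconc0 := hu.2 (hamem τ hτ) (hbmem τ hτ)
      (by norm_num : (0:ℝ) ≤ 1/2) (by norm_num : (0:ℝ) ≤ 1/2) (by norm_num)
    simp only [smul_eq_mul] at hconc0
    have heqc : (1/2:ℝ) * ψ (s + (s'-s)*τ) + (1/2:ℝ) * ψ (t + (t'-t)*τ)
        = (ψ (s + (s'-s)*τ) + ψ (t + (t'-t)*τ))/2 := by ring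
    rw [heqc] at hconc0
    have hconc : (deriv k (ψ (s + (s'-s)*τ)) * deriv (deriv k) (ψ (t + (t'-t)*τ))
        + deriv k (ψ (t + (t'-t)*τ)) * deriv (deriv k) (ψ (s + (s'-s)*τ)))
        * deriv (deriv k) ((ψ (s + (s'-s)*τ) + ψ (t + (t'-t)*τ))/2)
        ≤ 2 * deriv k ((ψ (s + (s'-s)*τ) + ψ (t + (t'-t)*τ))/2)
        * (deriv (deriv k) (ψ (s + (s'-s)*τ)) * deriv (deriv k) (ψ (t + (t'-t)*τ))) := by
      exact clear_div hKa hKb hKC hconc0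
    exact arith (s'-s) (t'-t) _ _ _ _ _ _ hA hB hKa hKb hK hKC hconc
  have hφconc : ConcaveOn ℝ (Icc (0:ℝ) 1) φ := by
    apply concaveOn_of_hasDerivWithinAt2_nonpos (convex_Icc 0 1) (f' := f') (f'' := f'')
    · exact fun τ hτ => (hφD τ hτ).continuousAt.continuousWithinAt
    · intro τ hτ
      rw [interior_Icc] at hτ
      exact (hφD τ (Ioo_subset_Icc_self hτ)).hasDerivWithinAt
    · intro τ hτ
      rw [interior_Icc] at hτ
      exact (hf'D τ (Ioo_subset_Icc_self hτ)).hasDerivWithinAt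
    · intro τ hτ
      rw [interior_Icc] at hτ
      exact hf''0 τ (Ioo_subset_Icc_self hτ)
  have h0m : (0:ℝ) ∈ Icc (0:ℝ) 1 := by norm_num
  have h1m : (1:ℝ) ∈ Icc (0:ℝ) 1 := by norm_num
  have hkey := hφconc.2 h0m h1m hw1 hw2 hw
  have e0 : φ 0 = k ((ψ s + ψ t)/2) := by simp [hφdef]
  have e1 : φ 1 = k ((ψ s' + ψ t')/2) := by
    have : s + (s'-s)*1 = s' := by ring
    have h2 : t + (t'-t)*1 = t' := by ring
    simp only [hφdef, this, h2]
  have e2 : w1 • (0:ℝ) + w2 • 1 = w2 := by simp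
  rw [e0, e1, e2] at hkey
  have hw1' : w1 = 1 - w2 := by linarith
  have e3 : φ w2 = k ((ψ (w1 • (s,t) + w2 • (s',t')).1 + ψ (w1 • (s,t) + w2 • (s',t')).2)/2) := by
    have c1 : (w1 • (s,t) + w2 • (s',t') : ℝ × ℝ).1 = s + (s'-s)*w2 := by
      simp [Prod.smul_mk, smul_eq_mul, hw1']; ring
    have c2 : (w1 • (s,t) + w2 • (s',t') : ℝ × ℝ).2 = t + (t'-t)*w2 := by
      simp [Prod.smul_mk, smul_eq_mul, hw1']; ring
    rw [c1, c2]
  rw [e3] at hkey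
  exact hkey
lemma qa_jensen (hIop : IsOpen I) (hIcv : Convex ℝ I) {k : ℝ → ℝ} (hk : ContDiffOn ℝ 2 k I)
    (hk' : ∀ x ∈ I, 0 < deriv k x) (hk'' : ∀ x ∈ I, 0 < deriv (deriv k) x)
    (hu : ConcaveOn ℝ I (fun x => deriv k x / deriv (deriv k) x))
    {n : ℕ} {x y : Fin (n+1) → ℝ} (hx : ∀ i, x i ∈ I) (hy : ∀ i, y i ∈ I) :
    QAMean I k (fun i => (x i + y i)/2) ≤ (QAMean I k x + QAMean I k y)/2 := by
  have hm : StrictMonoOn k I := strictMono_of hIop hIcv hk hk'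
  have hmid : ∀ i, (x i + y i)/2 ∈ I := fun i => QAAux.mid_mem hIcv (hx i) (hy i)
  obtain ⟨hz, hz'⟩ := qa_spec hIcv hk.continuousOn hmid
  obtain ⟨hzx, hzx'⟩ := qa_spec hIcv hk.continuousOn hx
  obtain ⟨hzy, hzy'⟩ := qa_spec hIcv hk.continuousOn hy
  have hH := H_concave hIop hIcv hk hk' hk'' hu
  have hjen := hH.le_map_sum (t := Finset.univ) (w := fun _ : Fin (n+1) => ((n:ℝ)+1)⁻¹)
    (p := fun i => (k (x i), k (y i))) (fun i _ => by positivity) (wsum n)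
    (fun i _ => ⟨⟨x i, hx i, rfl⟩, ⟨y i, hy i, rfl⟩⟩)
  -- compute the sum of pairs
  have hsum : ∑ i, (((n:ℝ)+1)⁻¹) • (k (x i), k (y i))
      = ((∑ i, k (x i))/((n:ℝ)+1), (∑ i, k (y i))/((n:ℝ)+1)) := by
    rw [Prod.ext_iff]
    constructor
    · rw [Prod.fst_sum]
      simpa using avg_eq (fun i => k (x i))
    · rw [Prod.snd_sum]
      simpa using avg_eq (fun i => k (y i))
  rw [hsum] at hjen
  have hL : ∀ i : Fin (n+1),
      k ((Function.invFunOn k I (k (x i)) + Function.invFunOn k I (k (y i)))/2)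
        = k ((x i + y i)/2) := by
    intro i
    rw [inv_apply hm (hx i), inv_apply hm (hy i)]
  simp only [hL] at hjen
  rw [avg_eq] at hjen
  have hR : Function.invFunOn k I ((∑ i, k (x i))/((n:ℝ)+1)) = QAMean I k x := by
    rw [← hzx', inv_apply hm hzx]
  have hR' : Function.invFunOn k I ((∑ i, k (y i))/((n:ℝ)+1)) = QAMean I k y := by
    rw [← hzy', inv_apply hm hzy]
  rw [hR, hR'] at hjen
  have hkey : k (QAMean I k (fun i => (x i + y i)/2)) ≤ k ((QAMean I k x + QAMean I k y)/2) := by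
    rw [hz']
    exact hjen
  exact (hm.le_iff_le hz (mid_mem hIcv hzx hzy)).1 hkey
lemma qa_neg (hIcv : Convex ℝ I) {k : ℝ → ℝ} (hkc : ContinuousOn k I) (hinj : Set.InjOn k I)
    {n : ℕ} {a : Fin (n+1) → ℝ} (ha : ∀ i, a i ∈ I) :
    QAMean I (fun x => -k x) a = QAMean I k a := by
  obtain ⟨hz, hz'⟩ := qa_spec hIcv hkc ha
  obtain ⟨hz2, hz2'⟩ := qa_spec hIcv (hkc.neg) ha (k := fun x => -k x)
  refine hinj hz2 hz ?_
  have : -k (QAMean I (fun x => -k x) a) = -((∑ i, k (a i)) / (↑n+1)) := by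
    rw [hz2']
    rw [Finset.sum_neg_distrib, neg_div]
  rw [hz'] ; linarith [this]

lemma normalize (hIop : IsOpen I) (hIcv : Convex ℝ I) {k : ℝ → ℝ}
    (hk : ContDiffOn ℝ 2 k I) (hk' : ∀ x ∈ I, deriv k x ≠ 0)
    (hk'' : ∀ x ∈ I, deriv (deriv k) x ≠ 0)
    (hrpos : ∀ x ∈ I, 0 < deriv k x / deriv (deriv k) x) :
    ∃ k1 : ℝ → ℝ, ContDiffOn ℝ 2 k1 I ∧ (∀ x ∈ I, 0 < deriv k1 x) ∧
      (∀ x ∈ I, 0 < deriv (deriv k1) x) ∧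
      (∀ x ∈ I, deriv k1 x / deriv (deriv k1) x = deriv k x / deriv (deriv k) x) ∧
      (∀ (n : ℕ) (a : Fin (n+1) → ℝ), (∀ i, a i ∈ I) → QAMean I k1 a = QAMean I k a) := by
  have hsign := sign_dichotomy hIop hIcv hk hk'
  have hdd : ∀ x ∈ I, 0 < deriv k x → 0 < deriv (deriv k) x := by
    intro x hx h1
    rcases lt_or_gt_of_ne (hk'' x hx) with h2 | h2
    · exfalso
      have := hrpos x hx
      have : deriv k x / deriv (deriv k) x < 0 := div_neg_of_pos_of_neg h1 h2
      linarith [hrpos x hx]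
    · exact h2
  have hdd' : ∀ x ∈ I, deriv k x < 0 → deriv (deriv k) x < 0 := by
    intro x hx h1
    rcases lt_or_gt_of_ne (hk'' x hx) with h2 | h2
    · exact h2
    · exfalso
      have : deriv k x / deriv (deriv k) x < 0 := div_neg_of_neg_of_pos h1 h2
      linarith [hrpos x hx]
  rcases hsign with hpos | hneg
  · exact ⟨k, hk, hpos, fun x hx => hdd x hx (hpos x hx), fun x hx => rfl,
      fun n a ha => rfl⟩
  · refine ⟨fun x => -k x, hk.neg, ?_, ?_, ?_, ?_⟩
    · intro x hx
      rw [deriv.fun_neg]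
      linarith [hneg x hx]
    · intro x hx
      rw [deriv.fun_neg']
      rw [show (deriv fun x => -deriv k x) x = -deriv (deriv k) x from deriv.fun_neg]
      linarith [hdd' x hx (hneg x hx)]
    · intro x hx
      rw [deriv.fun_neg']
      rw [show (deriv fun x => -deriv k x) x = -deriv (deriv k) x from deriv.fun_neg]
      simp only [deriv.fun_neg]
      rw [neg_div_neg_eq]
    · intro n a ha
      refine qa_neg hIcv hk.continuousOn ?_ ha
      exact (strictAntiOn_of_deriv_neg hIcv hk.continuousOn
        (fun x hx => hneg x (by rwa [hIop.interior_eq] at hx))).injOn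

end QAAux

theorem stmt_15 (I : Set ℝ) (hIop : IsOpen I) (hIcv : Convex ℝ I) (hIne : I.Nonempty)
    (f : ℝ → ℝ) (hf : ContDiffOn ℝ 2 f I)
    (hf' : ∀ x ∈ I, 0 < deriv f x) (hf'' : ∀ x ∈ I, 0 < deriv (deriv f) x)
    (m : ℝ → ℝ)
    (hm : ∀ x ∈ I, m x = sInf {t : ℝ | ∃ ψ : ℝ → ℝ, ContinuousOn ψ I ∧
      ConcaveOn ℝ I ψ ∧ (∀ y ∈ I, deriv f y / deriv (deriv f) y ≤ ψ y) ∧ t = ψ x})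
    (hmne : ∀ x ∈ I, {t : ℝ | ∃ ψ : ℝ → ℝ, ContinuousOn ψ I ∧
      ConcaveOn ℝ I ψ ∧ (∀ y ∈ I, deriv f y / deriv (deriv f) y ≤ ψ y) ∧ t = ψ x}.Nonempty)
    (g : ℝ → ℝ) (hg : ContDiffOn ℝ 2 g I)
    (hg' : ∀ x ∈ I, deriv g x ≠ 0) (hg'' : ∀ x ∈ I, deriv (deriv g) x ≠ 0)
    (hgm : ∀ x ∈ I, deriv g x / deriv (deriv g) x = m x) :
    (∀ n : ℕ, ∀ x y : Fin (n + 1) → ℝ, (∀ i, x i ∈ I) → (∀ i, y i ∈ I) →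
      QAMean I g (fun i => (x i + y i) / 2) ≤ (QAMean I g x + QAMean I g y) / 2) ∧
    (∀ n : ℕ, ∀ a : Fin (n + 1) → ℝ, (∀ i, a i ∈ I) →
      QAMean I g a ≤ QAMean I f a) ∧
    (∀ h : ℝ → ℝ, memU0 I f h → ∀ n : ℕ, ∀ a : Fin (n + 1) → ℝ, (∀ i, a i ∈ I) →
      QAMean I h a ≤ QAMean I g a) ∧
    (∀ n : ℕ, ∀ a : Fin (n + 1) → ℝ, (∀ i, a i ∈ I) →
      sSup {t : ℝ | ∃ h : ℝ → ℝ, memU0 I f h ∧ t = QAMean I h a} = QAMean I g a) := by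
  classical
  have hmle : ∀ ψ : ℝ → ℝ, ContinuousOn ψ I → ConcaveOn ℝ I ψ →
      (∀ y ∈ I, deriv f y / deriv (deriv f) y ≤ ψ y) → ∀ x ∈ I, m x ≤ ψ x := by
    intro ψ h1 h2 h3 x hx
    rw [hm x hx]
    refine csInf_le ⟨deriv f x / deriv (deriv f) x, ?_⟩ ⟨ψ, h1, h2, h3, rfl⟩
    rintro t ⟨ψ', c, cc, ge, rfl⟩
    exact ge x hx
  have hmge : ∀ x ∈ I, deriv f x / deriv (deriv f) x ≤ m x := by
    intro x hx; rw [hm x hx]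
    refine le_csInf (hmne x hx) ?_
    rintro t ⟨ψ', c, cc, ge, rfl⟩; exact ge x hx
  have hmpos : ∀ x ∈ I, 0 < m x := fun x hx =>
    lt_of_lt_of_le (div_pos (hf' x hx) (hf'' x hx)) (hmge x hx)
  have hmconc : ConcaveOn ℝ I m := by
    refine ⟨hIcv, ?_⟩
    intro x hx y hy a b ha hb hab
    have hz : a • x + b • y ∈ I := hIcv hx hy ha hb hab
    rw [hm _ hz]
    refine le_csInf (hmne _ hz) ?_
    rintro t ⟨ψ', c, cc, ge, rfl⟩
    have h1 := hmle ψ' c cc ge x hx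
    have h2 := hmle ψ' c cc ge y hy
    have h3 := cc.2 hx hy ha hb hab
    simp only [smul_eq_mul] at h3 ⊢
    nlinarith [mul_le_mul_of_nonneg_left h1 ha, mul_le_mul_of_nonneg_left h2 hb]
  have hgr : ∀ x ∈ I, 0 < deriv g x / deriv (deriv g) x := fun x hx => by
    rw [hgm x hx]; exact hmpos x hx
  obtain ⟨g1, hg1cd, hg1', hg1'', hg1r, hg1qa⟩ := QAAux.normalize hIop hIcv hg hg' hg'' hgr
  have hg1m : ∀ x ∈ I, deriv g1 x / deriv (deriv g1) x = m x := fun x hx => by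
    rw [hg1r x hx, hgm x hx]
  have hg1conc : ConcaveOn ℝ I (fun x => deriv g1 x / deriv (deriv g1) x) := by
    refine ⟨hIcv, ?_⟩
    intro x hx y hy a b ha hb hab
    have hz := hIcv hx hy ha hb hab
    dsimp only
    rw [hg1m _ hx, hg1m _ hy, hg1m _ hz]
    exact hmconc.2 hx hy ha hb hab
  have concl1 : ∀ n : ℕ, ∀ x y : Fin (n + 1) → ℝ, (∀ i, x i ∈ I) → (∀ i, y i ∈ I) →
      QAMean I g (fun i => (x i + y i) / 2) ≤ (QAMean I g x + QAMean I g y) / 2 := by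
    intro n x y hx hy
    have hmid : ∀ i, (x i + y i)/2 ∈ I := fun i => QAAux.mid_mem hIcv (hx i) (hy i)
    rw [← hg1qa n x hx, ← hg1qa n y hy, ← hg1qa n _ hmid]
    exact QAAux.qa_jensen hIop hIcv hg1cd hg1' hg1'' hg1conc hx hy
  have concl2 : ∀ n : ℕ, ∀ a : Fin (n + 1) → ℝ, (∀ i, a i ∈ I) →
      QAMean I g a ≤ QAMean I f a := by
    intro n a ha
    have hcmp : ∀ x ∈ I, deriv f x * deriv (deriv g1) x ≤ deriv (deriv f) x * deriv g1 x := by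
      intro x hx
      have h1le : deriv f x / deriv (deriv f) x ≤ deriv g1 x / deriv (deriv g1) x := by
        rw [hg1m x hx]; exact hmge x hx
      have hcross := (div_le_div_iff₀ (hf'' x hx) (hg1'' x hx)).1 h1le
      exact hcross.trans_eq (mul_comm _ _)
    rw [← hg1qa n a ha]
    exact QAAux.qa_le hIop hIcv hg1cd hf hg1' hf' hcmp ha
  have concl3 : ∀ h : ℝ → ℝ, memU0 I f h → ∀ n : ℕ, ∀ a : Fin (n + 1) → ℝ,
      (∀ i, a i ∈ I) → QAMean I h a ≤ QAMean I g a := by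
    intro h hh n a ha
    obtain ⟨hhcd, hh', hh'', hhconc, hhge⟩ := hh
    have hhr : ∀ x ∈ I, 0 < deriv h x / deriv (deriv h) x := fun x hx =>
      lt_of_lt_of_le (div_pos (hf' x hx) (hf'' x hx)) (hhge x hx)
    obtain ⟨h1, hh1cd, hh1', hh1'', hh1r, hh1qa⟩ := QAAux.normalize hIop hIcv hhcd hh' hh'' hhr
    have hucont : ContinuousOn (fun x => deriv h x / deriv (deriv h) x) I := by
      apply ContinuousOn.div
      · exact hhcd.continuousOn_deriv_of_isOpen hIop one_le_two
      · exact (hhcd.deriv_of_isOpen hIop le_rfl).continuousOn_deriv_of_isOpen hIop le_rfl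
      · exact hh''
    have hmleh := hmle _ hucont hhconc hhge
    have hcmp : ∀ x ∈ I, deriv g1 x * deriv (deriv h1) x ≤ deriv (deriv g1) x * deriv h1 x := by
      intro x hx
      have h1le : deriv g1 x / deriv (deriv g1) x ≤ deriv h1 x / deriv (deriv h1) x := by
        rw [hg1m x hx, hh1r x hx]; exact hmleh x hx
      have hcross := (div_le_div_iff₀ (hg1'' x hx) (hh1'' x hx)).1 h1le
      exact hcross.trans_eq (mul_comm _ _)
    rw [← hh1qa n a ha, ← hg1qa n a ha]
    exact QAAux.qa_le hIop hIcv hh1cd hg1cd hh1' hg1' hcmp ha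
  have hgU0 : memU0 I f g := by
    refine ⟨hg, hg', hg'', ⟨hIcv, ?_⟩, ?_⟩
    · intro x hx y hy a b ha hb hab
      have hz := hIcv hx hy ha hb hab
      dsimp only
      rw [hgm _ hx, hgm _ hy, hgm _ hz]
      exact hmconc.2 hx hy ha hb hab
    · intro x hx; rw [hgm x hx]; exact hmge x hx
  refine ⟨concl1, concl2, concl3, ?_⟩
  intro n a ha
  apply IsGreatest.csSup_eq
  constructor
  · exact ⟨g, hgU0, rfl⟩
  · rintro t ⟨h, hh, rfl⟩
    exact concl3 h hh n a ha
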